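/- Let G be a connected finite C-HH graph such that the neighbourhood of every vertex is an independent set. Then G is bipartite (contains no odd cycles). -/

import Mathlib

open SimpleGraph Walk

namespace SimpleGraph.Walk

variable {V : Type*} {G : SimpleGraph V} [DecidableEq V]

theorem takeUntil_congr' {u z b : V} {p q : G.Walk u z} (h : p = q) (hb : b ∈ p.support) :
    p.takeUntil b hb = q.takeUntil b (h ▸ hb) := by subst h; rfl

theorem dropUntil_congr' {u z b : V} {p q : G.Walk u z} (h : p = q) (hb : b ∈ p.support) :
    p.dropUntil b hb = q.dropUntil b (h ▸ hb) := by subst h; rfl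

theorem takeUntil_append_spec {u b z : V} (q1 : G.Walk u b) (q2 : G.Walk b z)
    (h : q1.support.Nodup) :
    (q1.append q2).takeUntil b (by rw [mem_support_append_iff]; exact Or.inl q1.end_mem_support)
      = q1 ∧
    (q1.append q2).dropUntil b (by rw [mem_support_append_iff]; exact Or.inl q1.end_mem_support)
      = q2 := by
  induction q1 with
  | nil =>
    cases q2 with
    | nil => simp [takeUntil, dropUntil]
    | cons r p => simp [takeUntil, dropUntil]
  | @cons u' a b' r p ih =>
    rw [support_cons, List.nodup_cons] at h
    have hne : u' ≠ b' := fun hab => h.1 (hab ▸ p.end_mem_support)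
    have H := ih q2 h.2
    constructor
    · show Walk.takeUntil (Walk.cons r (p.append q2)) b' _ = _
      dsimp only [takeUntil]
      simp only [hne, dif_neg, not_false_iff]
      rw [H.1]
    · show Walk.dropUntil (Walk.cons r (p.append q2)) b' _ = _
      dsimp only [dropUntil]
      simp only [hne, dif_neg, not_false_iff]
      exact H.2

end SimpleGraph.Walk

theorem reach_induce {V : Type*} {G : SimpleGraph V} :
    ∀ {u v : V} (p : G.Walk u v) (A : Set V) (hA : ∀ z ∈ p.support, z ∈ A)
      (z : V) (hz : z ∈ p.support),
      (G.induce A).Reachable ⟨u, hA u p.start_mem_support⟩ ⟨z, hA z hz⟩ := by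
  intro u v p
  induction p with
  | nil =>
    intro A hA z hz
    rw [mem_support_nil_iff] at hz
    subst hz
    exact Reachable.refl _
  | @cons a b c h p ih =>
    intro A hA z hz
    rw [support_cons, List.mem_cons] at hz
    rcases hz with rfl | hz
    · exact Reachable.refl _
    · have hA' : ∀ y ∈ p.support, y ∈ A := fun y hy => hA y (by rw [support_cons]; exact List.mem_cons_of_mem _ hy)
      have step : (G.induce A).Adj ⟨a, hA a (by simp [support_cons])⟩ ⟨b, hA' b p.start_mem_support⟩ := h
      exact step.reachable.trans (ih A hA' z hz)

/-- `G` is C-HH: every homomorphism from a finite connected induced subgraph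
of `G` into `G` extends to an endomorphism of `G`. -/
def IsCHH {α : Type*} (G : SimpleGraph α) : Prop :=
  ∀ A : Set α, A.Finite → (G.induce A).Connected →
    ∀ φ : G.induce A →g G, ∃ ψ : G →g G, ∀ a : A, ψ a.1 = φ a

/-- A connected finite C-HH graph in which the neighbourhood of every vertex
is an independent set is bipartite: it contains no odd cycles. -/
theorem cHH_independent_neighbourhoods_bipartite {α : Type*} [Fintype α]
    (G : SimpleGraph α) (hconn : G.Connected) (hG : IsCHH G)
    (hind : ∀ v x y : α, G.Adj v x → G.Adj v y → ¬ G.Adj x y) :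
    ∀ {v : α} (p : G.Walk v v), p.IsCycle → Even p.length := by
  classical
  have key : ∀ n : ℕ, ∀ v : α, ∀ w : G.Walk v v, w.length = n → Even n := by
    intro n
    induction n using Nat.strong_induction_on with
    | _ n IH =>
      intro v w hw
      by_contra hne
      -- destructure w = cons h₁ w₁
      cases w with
      | nil => exact hne (hw ▸ Even.zero)
      | @cons _ x _ h₁ w₁ =>
        -- Step 1: w₁.support is Nodup
        have nd1 : w₁.support.Nodup := by
          by_contra hdup
          obtain ⟨y, hy⟩ := List.exists_duplicate_iff_not_nodup.mpr hdup
          have hymem : y ∈ w₁.support := hy.mem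
          have hcount : 2 ≤ w₁.support.count y := List.duplicate_iff_two_le_count.mp hy
          have es : (w₁.takeUntil y hymem).append (w₁.dropUntil y hymem) = w₁ :=
            w₁.take_spec hymem
          have hsupp : w₁.support =
              (w₁.takeUntil y hymem).support ++ (w₁.dropUntil y hymem).support.tail := by
            conv_lhs => rw [← es]
            exact Walk.support_append _ _
          have hc1 : (w₁.takeUntil y hymem).support.count y = 1 :=
            w₁.count_support_takeUntil_eq_one hymem
          have hc2 : 1 ≤ (w₁.dropUntil y hymem).support.tail.count y := by
            rw [hsupp, List.count_append, hc1] at hcount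
            omega
          have hytail : y ∈ (w₁.dropUntil y hymem).support.tail := by
            rw [← List.count_pos_iff]
            omega
          -- destructure the dropUntil walk
          rcases hd : w₁.dropUntil y hymem with _ | ⟨h', t₃⟩
          · rw [hd] at hytail; simp at hytail
          · rw [hd] at hytail
            rw [Walk.support_cons] at hytail
            simp only [List.tail_cons] at hytail
            have hy3 : y ∈ t₃.support := hytail
            -- closed walk C and shortened walk W'
            have hC : (Walk.cons h' (t₃.takeUntil y hy3)).length =
                (t₃.takeUntil y hy3).length + 1 := by simp
            have elen : w₁.length = (w₁.takeUntil y hymem).length +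
                ((t₃.takeUntil y hy3).length + (t₃.dropUntil y hy3).length + 1) := by
              conv_lhs => rw [← es]
              rw [Walk.length_append, hd]
              have := congrArg Walk.length (t₃.take_spec hy3)
              rw [Walk.length_append] at this
              simp [← this]
            have hEc : Even ((t₃.takeUntil y hy3).length + 1) := by
              have hlt : (t₃.takeUntil y hy3).length + 1 < n := by
                have : w₁.length + 1 = n := by simpa using hw
                omega
              exact IH _ hlt y (Walk.cons h' (t₃.takeUntil y hy3)) (by simp)
            have hEw : Even ((w₁.takeUntil y hymem).length + (t₃.dropUntil y hy3).length + 1) := by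
              have hlt : (w₁.takeUntil y hymem).length + (t₃.dropUntil y hy3).length + 1 < n := by
                have : w₁.length + 1 = n := by simpa using hw
                omega
              exact IH _ hlt v
                (Walk.cons h₁ ((w₁.takeUntil y hymem).append (t₃.dropUntil y hy3)))
                (by simp [Walk.length_append])
            apply hne
            have : w₁.length + 1 = n := by simpa using hw
            have hsum : n = ((t₃.takeUntil y hy3).length + 1) +
                ((w₁.takeUntil y hymem).length + (t₃.dropUntil y hy3).length + 1) := by omega
            rw [hsum]
            exact hEc.add hEw
        -- destructure w₁ = cons h₂ t
        cases w₁ with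
        | nil => exact G.loopless.irrefl v h₁
        | @cons _ u _ h₂ t =>
          rw [Walk.support_cons, List.nodup_cons] at nd1
          obtain ⟨hxnot, ndt⟩ := nd1
          have hu_mem : u ∈ t.support := t.start_mem_support
          have hv_mem : v ∈ t.support := t.end_mem_support
          have hlent : t.length + 2 = n := by simpa using hw
          have hto : ¬ Even t.length := by
            intro he
            apply hne
            rcases he with ⟨k, hk⟩
            exact ⟨k + 1, by omega⟩
          have htpos : 0 < t.length := by
            rcases Nat.eq_zero_or_pos t.length with h0 | h0
            · exact absurd (h0 ▸ Even.zero) hto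
            · exact h0
          set u₂ := t.getVert 1 with hu₂
          have hadj_u : G.Adj u u₂ := by
            have := t.adj_getVert_succ (i := 0) htpos
            rwa [Walk.getVert_zero] at this
          -- the parity function along t
          -- key2 : adjacent support vertices have different parity
          have chord : ∀ (a b : α) (ha : a ∈ t.support) (hb : b ∈ t.support), G.Adj a b →
              b ∈ (t.dropUntil a ha).support →
              (Even (t.takeUntil a ha).length ↔ Even (t.takeUntil b hb).length) → False := by
            intro a b ha hb hadj hbd hiff
            have e2 : ((t.dropUntil a ha).takeUntil b hbd).append
                ((t.dropUntil a ha).dropUntil b hbd) = t.dropUntil a ha :=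
              (t.dropUntil a ha).take_spec hbd
            have e3 : ((t.takeUntil a ha).append ((t.dropUntil a ha).takeUntil b hbd)).append
                ((t.dropUntil a ha).dropUntil b hbd) = t := by
              rw [← Walk.append_assoc, e2, t.take_spec ha]
            have hq1nd : ((t.takeUntil a ha).append
                ((t.dropUntil a ha).takeUntil b hbd)).support.Nodup := by
              have : (((t.takeUntil a ha).append ((t.dropUntil a ha).takeUntil b hbd)).support
                  ++ ((t.dropUntil a ha).dropUntil b hbd).support.tail).Nodup := by
                rw [← Walk.support_append, e3]; exact ndt
              exact List.Nodup.of_append_left this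
            have hU := Walk.takeUntil_append_spec _ ((t.dropUntil a ha).dropUntil b hbd) hq1nd
            have e4 : t.takeUntil b hb =
                (t.takeUntil a ha).append ((t.dropUntil a ha).takeUntil b hbd) := by
              refine (Walk.takeUntil_congr' e3.symm hb).trans ?_
              exact hU.1
            have hlen : (t.takeUntil b hb).length =
                (t.takeUntil a ha).length + ((t.dropUntil a ha).takeUntil b hbd).length := by
              rw [e4, Walk.length_append]
            rw [hlen, Nat.even_add] at hiff
            have hSeven : Even ((t.dropUntil a ha).takeUntil b hbd).length := by tauto
            -- closed odd walk of length S+1 < n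
            have hlt : ((t.dropUntil a ha).takeUntil b hbd).length + 1 < n := by
              have h1 := (t.dropUntil a ha).length_takeUntil_le hbd
              have h2 := t.length_dropUntil_le ha
              omega
            have := IH _ hlt a (((t.dropUntil a ha).takeUntil b hbd).concat hadj.symm)
              (by rw [Walk.length_concat])
            rw [Nat.even_add_one] at this
            exact this hSeven
          have symcase : ∀ (a b : α) (ha : a ∈ t.support) (hb : b ∈ t.support),
              b ∈ (t.dropUntil a ha).support ∨ a ∈ (t.dropUntil b hb).support := by
            intro a b ha hb
            by_cases hc : b ∈ (t.dropUntil a ha).support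
            · exact Or.inl hc
            right
            have hbT : b ∈ (t.takeUntil a ha).support := by
              have hb' := hb
              rw [← t.take_spec ha, Walk.mem_support_append_iff] at hb'
              tauto
            have e2 : ((t.takeUntil a ha).takeUntil b hbT).append
                ((t.takeUntil a ha).dropUntil b hbT) = t.takeUntil a ha :=
              (t.takeUntil a ha).take_spec hbT
            have e3 : ((t.takeUntil a ha).takeUntil b hbT).append
                (((t.takeUntil a ha).dropUntil b hbT).append (t.dropUntil a ha)) = t := by
              rw [Walk.append_assoc, e2, t.take_spec ha]
            have hnd1 : ((t.takeUntil a ha).takeUntil b hbT).support.Nodup := by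
              have : (((t.takeUntil a ha).takeUntil b hbT).support ++
                  (((t.takeUntil a ha).dropUntil b hbT).append (t.dropUntil a ha)).support.tail).Nodup := by
                rw [← Walk.support_append, e3]; exact ndt
              exact List.Nodup.of_append_left this
            have hU := Walk.takeUntil_append_spec _
              (((t.takeUntil a ha).dropUntil b hbT).append (t.dropUntil a ha)) hnd1
            have e4 : t.dropUntil b hb =
                ((t.takeUntil a ha).dropUntil b hbT).append (t.dropUntil a ha) := by
              refine (Walk.dropUntil_congr' e3.symm hb).trans ?_
              exact hU.2
            rw [e4, Walk.mem_support_append_iff]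
            exact Or.inr (t.dropUntil a ha).start_mem_support
          have key2 : ∀ (a b : α) (ha : a ∈ t.support) (hb : b ∈ t.support), G.Adj a b →
              ¬(Even (t.takeUntil a ha).length ↔ Even (t.takeUntil b hb).length) := by
            intro a b ha hb hadj hiff
            rcases symcase a b ha hb with h | h
            · exact chord a b ha hb hadj h hiff
            · exact chord b a hb ha hadj.symm h hiff.symm
          -- build the homomorphism
          set A : Set α := {z | z ∈ t.support} with hA
          have hf : ∀ {za zb : ↥A}, (G.induce A).Adj za zb →
              G.Adj (if Even ((t.takeUntil za.1 za.2).length) then u else u₂)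
                (if Even ((t.takeUntil zb.1 zb.2).length) then u else u₂) := by
            rintro ⟨a, ha⟩ ⟨b, hb⟩ hab
            have hadj : G.Adj a b := hab
            have hne2 := key2 a b ha hb hadj
            by_cases hA' : Even ((t.takeUntil a ha).length) <;>
              by_cases hB' : Even ((t.takeUntil b hb).length)
            · exact absurd (Iff.intro (fun _ => hB') (fun _ => hA')) hne2
            · simp only [if_pos hA', if_neg hB']; exact hadj_u
            · simp only [if_neg hA', if_pos hB']; exact hadj_u.symm
            · exact absurd (Iff.intro (fun _ => hB') (fun _ => hA')) (by tauto)
          have hconnA : (G.induce A).Connected := by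
            have hAmem : ∀ z ∈ t.support, z ∈ A := fun z hz => hz
            rw [connected_iff]
            refine ⟨?_, ⟨⟨u, hu_mem⟩⟩⟩
            intro za zb
            have r1 := reach_induce t A hAmem za.1 za.2
            have r2 := reach_induce t A hAmem zb.1 zb.2
            exact r1.symm.trans r2
          obtain ⟨ψ, hψ⟩ := hG A (A.toFinite) hconnA
            ⟨fun z => if Even ((t.takeUntil z.1 z.2).length) then u else u₂,
              fun {za zb} h => hf h⟩
          -- ψ u = u
          have hψu : ψ u = u := by
            have h0 : t.takeUntil u hu_mem = Walk.nil := by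
              have hU := Walk.takeUntil_append_spec (Walk.nil : G.Walk u u) t (by simp)
              have e : (Walk.nil : G.Walk u u).append t = t := Walk.nil_append t
              exact (Walk.takeUntil_congr' e.symm hu_mem).trans hU.1
            have hthis := hψ ⟨u, hu_mem⟩
            rw [hthis]
            show (if Even ((t.takeUntil u hu_mem).length) then u else u₂) = u
            rw [h0]
            simp
          have hψv : ψ v = u₂ := by
            have h0 : t.takeUntil v hv_mem = t := by
              have hU := Walk.takeUntil_append_spec t (Walk.nil : G.Walk v v) ndt
              have e : t.append (Walk.nil : G.Walk v v) = t := Walk.append_nil t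
              exact (Walk.takeUntil_congr' e.symm hv_mem).trans hU.1
            have hthis := hψ ⟨v, hv_mem⟩
            rw [hthis]
            show (if Even ((t.takeUntil v hv_mem).length) then u else u₂) = u₂
            rw [h0]
            rw [if_neg hto]
          have a1 : G.Adj (ψ x) u := by
            have := ψ.map_adj h₂
            rwa [hψu] at this
          have a2 : G.Adj (ψ x) u₂ := by
            have := ψ.map_adj h₁.symm
            rwa [hψv] at this
          exact hind (ψ x) u u₂ a1 a2 hadj_u
  intro v p _
  exact key p.length v p rfl
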